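/- Let α be a non-quadratic irrational real number and β a real number. Suppose there exists m ∈ ℕ such that for every natural number n with n ≥ m and n ≥ 1 there exist integers i, j, k, l with |i·l − j·k| = 1 and (i·(n·α) + j)/(k·(n·α) + l) = n·β. Then there exists an integer k with α = β + k or α = −β + k. -/

import Mathlib

/-- Two irrational reals are `PGL₂(ℤ)`-equivalent when related by an integral
fractional linear transformation of determinant `±1`. -/
def PGL2ZEquiv (x y : ℝ) : Prop :=
  ∃ i j k l : ℤ, |i * l - j * k| = 1 ∧
    ((i : ℝ) * x + (j : ℝ)) / ((k : ℝ) * x + (l : ℝ)) = y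

/-- Integer linear combinations of `1, α, α²` vanish only trivially for a
non-quadratic irrational `α`. -/
lemma stmt5_aux_lin (α : ℝ) (h : LinearIndependent ℚ ![(1:ℝ), α, α^2])
    (c0 c1 c2 : ℤ) (hc : (c0:ℝ) + c1*α + c2*α^2 = 0) :
    c0 = 0 ∧ c1 = 0 ∧ c2 = 0 := by
  have h2 := Fintype.linearIndependent_iff.mp h ![(c0:ℚ),(c1:ℚ),(c2:ℚ)] ?_
  · refine ⟨?_, ?_, ?_⟩
    · have := h2 0; simp at this; exact_mod_cast this
    · have := h2 1; simp at this; exact_mod_cast this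
    · have := h2 2; simp at this; exact_mod_cast this
  · simp [Fin.sum_univ_three, Rat.smul_def]
    linear_combination hc

/-- Descent: a natural-valued sequence with `n * f n = (n+1) * f (n+1)` from
some positive `N` on vanishes from `N` on. -/
lemma stmt5_descent (f : ℕ → ℕ) (N : ℕ) (hN : 1 ≤ N)
    (step : ∀ n, N ≤ n → n * f n = (n+1) * f (n+1)) : ∀ n, N ≤ n → f n = 0 := by
  intro n hn
  by_contra h0
  have const : ∀ r, (n + r) * f (n + r) = n * f n := by
    intro r
    induction r with
    | zero => simp
    | succ r ih =>
      have hs := step (n+r) (le_trans hn (Nat.le_add_right _ _))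
      have : n + (r+1) = (n+r) + 1 := by omega
      rw [this]
      omega
  have h1 := const (n * f n)
  have h2 : 1 ≤ f (n + n * f n) := by
    rcases Nat.eq_zero_or_pos (f (n + n * f n)) with hz | hp
    · rw [hz] at h1
      simp at h1
      omega
    · exact hp
  have h3 : n + n * f n ≤ (n + n * f n) * f (n + n * f n) :=
    Nat.le_mul_of_pos_right _ h2
  omega

/-- The matrix identities coming from equality of two Möbius transforms. -/
lemma stmt5_key_int (a1 a2 a3 a4 b1 b2 b3 b4 : ℤ)
    (h2 : a1*b3 - a3*b1 = 0) (h1 : a1*b4 + a2*b3 - a4*b1 - a3*b2 = 0) :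
    (a1*b4 - a3*b2)^2 = (a1*a4 - a2*a3)*(b1*b4 - b2*b3) ∧
    (b1*b4 - b2*b3) * a3 = (a1*b4 - a3*b2) * b3 := by
  constructor
  · linear_combination (a1*b4 - a3*b2) * h1 - (a2*b4 - a4*b2) * h2
  · linear_combination (-b4) * h2

/-- The arithmetic consequence of the key identities: `n |k_n| = (n+1) |k_{n+1}|`. -/
lemma stmt5_step_arith (n : ℕ) (hn1 : 1 ≤ n) (Kn Kn' d d' p : ℤ)
    (hdn : |d| = 1) (hdn' : |d'| = 1)
    (hp2 : p^2 = ((n:ℤ)^2*d) * (((n:ℤ)+1)^2*d'))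
    (hid3 : (((n:ℤ)+1)^2*d') * ((n:ℤ)^2 * Kn) = p * (((n:ℤ)+1)^2 * Kn')) :
    n * Kn.natAbs = (n+1) * Kn'.natAbs := by
  have hnZ : (1:ℤ) ≤ (n:ℤ) := by exact_mod_cast hn1
  have hd : d = 1 ∨ d = -1 := (abs_eq (by norm_num)).mp hdn
  have hd' : d' = 1 ∨ d' = -1 := (abs_eq (by norm_num)).mp hdn'
  have hdd : d * d' = 1 := by
    rcases hd with h | h <;> rcases hd' with h' | h' <;> subst h <;> subst h' <;>
      nlinarith [sq_nonneg p, hp2]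
  have hp2' : (p - (n:ℤ)*((n:ℤ)+1)) * (p + (n:ℤ)*((n:ℤ)+1)) = 0 := by
    linear_combination hp2 + (n:ℤ)^2*((n:ℤ)+1)^2 * hdd
  have hpm : p = (n:ℤ)*((n:ℤ)+1) ∨ p = -((n:ℤ)*((n:ℤ)+1)) := by
    rcases mul_eq_zero.mp hp2' with h | h
    · left; linarith
    · right; linarith
  have hB : d' * ((n:ℤ)^2 * Kn) = p * Kn' := by
    have hne : ((n:ℤ)+1)^2 ≠ 0 := by positivity
    apply mul_left_cancel₀ hne
    linear_combination hid3
  have hfin : (n:ℤ) * Kn = ((n:ℤ)+1) * Kn' ∨ (n:ℤ) * Kn = -(((n:ℤ)+1) * Kn') := by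
    have hnne : (n:ℤ) ≠ 0 := by omega
    rcases hd' with h' | h' <;> rcases hpm with hp | hp
    · left; apply mul_left_cancel₀ hnne
      linear_combination hB - (n:ℤ)^2*Kn * h' + Kn' * hp
    · right; apply mul_left_cancel₀ hnne
      linear_combination hB - (n:ℤ)^2*Kn * h' + Kn' * hp
    · right; apply mul_left_cancel₀ hnne
      linear_combination -hB + (n:ℤ)^2*Kn * h' - Kn' * hp
    · left; apply mul_left_cancel₀ hnne
      linear_combination -hB + (n:ℤ)^2*Kn * h' - Kn' * hp
  have goalZ : (n:ℤ) * |Kn| = ((n:ℤ)+1) * |Kn'| := by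
    have h1 : |(n:ℤ) * Kn| = |((n:ℤ)+1) * Kn'| := by
      rcases hfin with h | h <;> rw [h] <;> simp
    rw [abs_mul, abs_mul, abs_of_nonneg (by omega : (0:ℤ) ≤ (n:ℤ)),
      abs_of_nonneg (by omega : (0:ℤ) ≤ (n:ℤ)+1)] at h1
    exact h1
  have h2 : ((n * Kn.natAbs : ℕ) : ℤ) = (((n+1) * Kn'.natAbs : ℕ) : ℤ) := by
    push_cast [Int.natCast_natAbs]
    exact goalZ
  exact_mod_cast h2

lemma stmt5_final (α β : ℝ) (hα : Irrational α) (N : ℕ) (hN1 : 1 ≤ N)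
    (E C : ℕ → ℤ)
    (he : ∀ n, N ≤ n → E n = 1 ∨ E n = -1)
    (heq : ∀ n, N ≤ n → (n:ℝ) * β = (E n : ℝ) * ((n:ℝ)*α) + (C n : ℝ)) :
    ∃ k : ℤ, α = β + (k : ℝ) ∨ α = -β + (k : ℝ) := by
  have hN' : N ≤ N + 1 := by omega
  have eq1 := heq N le_rfl
  have eq2 := heq (N+1) hN'
  push_cast at eq1 eq2
  have he1 := he N le_rfl
  have he2 := he (N+1) hN'
  have hee : E (N+1) = E N := by
    by_contra hne
    have h' : E (N+1) = -(E N) := by rcases he1 with h|h <;> rcases he2 with h2|h2 <;> omega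
    have h'R : ((E (N+1) : ℤ) : ℝ) = -((E N : ℤ) : ℝ) := by
      rw [h']; push_cast; ring
    have hrat : ((2*(E N)*(N:ℤ)*((N:ℤ)+1) : ℤ) : ℝ) * α
        = (((N:ℤ)*(C (N+1)) - ((N:ℤ)+1)*(C N) : ℤ) : ℝ) := by
      push_cast
      linear_combination -((N:ℝ)+1) * eq1 + (N:ℝ) * eq2 + (N:ℝ)*((N:ℝ)+1)*α * h'R
    have hne0 : (2*(E N)*(N:ℤ)*((N:ℤ)+1) : ℤ) ≠ 0 := by
      have : (1:ℤ) ≤ (N:ℤ) := by exact_mod_cast hN1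
      rcases he1 with h|h <;> rw [h] <;> nlinarith
    apply hα
    refine ⟨(((N:ℤ)*(C (N+1)) - ((N:ℤ)+1)*(C N) : ℤ) : ℚ) / ((2*(E N)*(N:ℤ)*((N:ℤ)+1) : ℤ) : ℚ), ?_⟩
    have hQ0 : ((2*(E N)*(N:ℤ)*((N:ℤ)+1) : ℤ) : ℚ) ≠ 0 := by exact_mod_cast hne0
    rw [Rat.cast_div]
    rw [div_eq_iff (by exact_mod_cast hne0 : ((((2*(E N)*(N:ℤ)*((N:ℤ)+1) : ℤ) : ℚ)):ℝ) ≠ 0)]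
    push_cast
    push_cast at hrat
    linarith [hrat]
  have hb : β = (E N : ℝ) * α + ((C (N+1) - C N : ℤ) : ℝ) := by
    have hER : ((E (N+1) : ℤ) : ℝ) = ((E N : ℤ) : ℝ) := by rw [hee]
    push_cast
    linear_combination eq2 - eq1 + α * ((N:ℝ)+1) * hER
  rcases he1 with h | h
  · refine ⟨C N - C (N+1), Or.inl ?_⟩
    rw [h] at hb
    push_cast at hb ⊢
    linarith
  · refine ⟨C (N+1) - C N, Or.inr ?_⟩
    rw [h] at hb
    push_cast at hb ⊢
    linarith

/-- If a non-quadratic irrational `α` and a real `β` are eventually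
`PGL₂(ℤ)`-equivalent, then `α = ±β + k` for some integer `k`. -/
theorem stmt_5 (α β : ℝ) (hα : Irrational α)
    (hnq : LinearIndependent ℚ ![(1 : ℝ), α, α ^ 2])
    (hev : ∃ m : ℕ, ∀ n : ℕ, m ≤ n → 1 ≤ n →
      PGL2ZEquiv ((n : ℝ) * α) ((n : ℝ) * β)) :
    ∃ k : ℤ, α = β + (k : ℝ) ∨ α = -β + (k : ℝ) := by
  obtain ⟨m, hm⟩ := hev
  set N := max m 1 with hNdef
  have hN1 : 1 ≤ N := le_max_right m 1
  -- extract the matrices, with cleared denominators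
  have hex : ∀ n : ℕ, ∃ i j k l : ℤ, N ≤ n →
      (|i * l - j * k| = 1 ∧
        (i:ℝ) * ((n:ℝ)*α) + j = ((n:ℝ)*β) * ((k:ℝ) * ((n:ℝ)*α) + l)) := by
    intro n
    by_cases hn : N ≤ n
    · have hn1 : 1 ≤ n := le_trans hN1 hn
      obtain ⟨i,j,k,l,hdet,heq⟩ := hm n (le_trans (le_max_left m 1) hn) hn1
      refine ⟨i,j,k,l, fun _ => ⟨hdet, ?_⟩⟩
      have hirr : Irrational ((n:ℝ)*α) := hα.natCast_mul (by omega)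
      have hden : (k:ℝ) * ((n:ℝ)*α) + l ≠ 0 := by
        intro h0
        rcases eq_or_ne k 0 with hk | hk
        · rw [hk] at h0
          simp at h0
          have hl : l = 0 := by exact_mod_cast h0
          rw [hk, hl] at hdet
          simp at hdet
        · apply hirr
          refine ⟨(-l : ℚ)/(k : ℚ), ?_⟩
          have hkR : (k:ℝ) ≠ 0 := Int.cast_ne_zero.mpr hk
          push_cast
          field_simp
          linarith
      rw [div_eq_iff hden] at heq
      rw [← heq]
    · exact ⟨0,0,0,0, fun h => absurd h hn⟩
  choose I J K L hIJKL using hex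
  have hdet : ∀ n, N ≤ n → |I n * L n - J n * K n| = 1 := fun n hn => (hIJKL n hn).1
  have hrel : ∀ n, N ≤ n → (I n :ℝ) * ((n:ℝ)*α) + J n
      = ((n:ℝ)*β) * ((K n :ℝ) * ((n:ℝ)*α) + L n) := fun n hn => (hIJKL n hn).2
  -- the descent step
  have hstep : ∀ n, N ≤ n → n * (K n).natAbs = (n+1) * (K (n+1)).natAbs := by
    intro n hn
    have hn1 : 1 ≤ n := le_trans hN1 hn
    have hn' : N ≤ n + 1 := by omega
    have h1 := hrel n hn
    have h2 := hrel (n+1) hn'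
    set a1 : ℤ := (n:ℤ) * I n with ha1
    set a2 : ℤ := J n with ha2
    set a3 : ℤ := (n:ℤ)^2 * K n with ha3
    set a4 : ℤ := (n:ℤ) * L n with ha4
    set b1 : ℤ := ((n:ℤ)+1) * I (n+1) with hb1
    set b2 : ℤ := J (n+1) with hb2
    set b3 : ℤ := ((n:ℤ)+1)^2 * K (n+1) with hb3
    set b4 : ℤ := ((n:ℤ)+1) * L (n+1) with hb4
    have crossR : ((a1:ℝ) * α + a2) * ((b3:ℝ) * α + b4)
        = ((b1:ℝ) * α + b2) * ((a3:ℝ) * α + a4) := by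
      rw [ha1, ha2, ha3, ha4, hb1, hb2, hb3, hb4]
      push_cast
      push_cast at h1 h2
      linear_combination (((n:ℝ)+1) * (((n:ℝ)+1) * (K (n+1) : ℝ) * α + (L (n+1) : ℝ))) * h1
        - ((n:ℝ) * ((n:ℝ) * (K n : ℝ) * α + (L n : ℝ))) * h2
    have hco : (((a2*b4 - a4*b2 : ℤ)):ℝ) + ((a1*b4 + a2*b3 - a4*b1 - a3*b2 : ℤ)) * α
        + ((a1*b3 - a3*b1 : ℤ)) * α^2 = 0 := by
      push_cast
      linear_combination crossR
    obtain ⟨hc0, hc1, hc2⟩ := stmt5_aux_lin α hnq _ _ _ hco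
    obtain ⟨hp2, hid3⟩ := stmt5_key_int a1 a2 a3 a4 b1 b2 b3 b4 hc2 hc1
    apply stmt5_step_arith n hn1 (K n) (K (n+1))
      (I n * L n - J n * K n) (I (n+1) * L (n+1) - J (n+1) * K (n+1))
      (a1*b4 - a3*b2) (hdet n hn) (hdet (n+1) hn')
    · calc (a1*b4 - a3*b2)^2 = (a1*a4 - a2*a3)*(b1*b4 - b2*b3) := hp2
        _ = ((n:ℤ)^2*(I n * L n - J n * K n))
            * (((n:ℤ)+1)^2*(I (n+1) * L (n+1) - J (n+1) * K (n+1))) := by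
          rw [ha1, ha2, ha3, ha4, hb1, hb2, hb3, hb4]; ring
    · calc (((n:ℤ)+1)^2*(I (n+1) * L (n+1) - J (n+1) * K (n+1))) * ((n:ℤ)^2 * K n)
          = (b1*b4 - b2*b3) * a3 := by
            rw [ha3, hb1, hb2, hb3, hb4]; ring
        _ = (a1*b4 - a3*b2) * b3 := hid3
        _ = (a1*b4 - a3*b2) * (((n:ℤ)+1)^2 * K (n+1)) := by rw [hb3]
  -- conclude K n = 0 for n ≥ N
  have hK0 : ∀ n, N ≤ n → K n = 0 := by
    intro n hn
    have := stmt5_descent (fun n => (K n).natAbs) N hN1 hstep n hn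
    simpa [Int.natAbs_eq_zero] using this
  -- now the relation reads n β = ±(n α) + const
  have he : ∀ n, N ≤ n → I n * L n = 1 ∨ I n * L n = -1 := by
    intro n hn
    have h := hdet n hn
    rw [hK0 n hn] at h
    simp at h
    exact (abs_eq (by norm_num)).mp (by rw [abs_mul]; exact h)
  have heq : ∀ n, N ≤ n → (n:ℝ) * β
      = ((I n * L n : ℤ) : ℝ) * ((n:ℝ)*α) + ((J n * L n : ℤ) : ℝ) := by
    intro n hn
    have h := hrel n hn
    rw [hK0 n hn] at h
    have hLL : L n * L n = 1 := by
      have hu : IsUnit (L n) := by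
        rcases he n hn with h' | h'
        · exact IsUnit.of_mul_eq_one (I n) (by linear_combination h')
        · exact IsUnit.of_mul_eq_one (-(I n)) (by linear_combination -h')
      rcases Int.isUnit_iff.mp hu with h2 | h2 <;> rw [h2] <;> norm_num
    have hLLR : (L n : ℝ) * (L n : ℝ) = 1 := by exact_mod_cast hLL
    push_cast
    push_cast at h
    linear_combination -(L n : ℝ) * h - (n:ℝ) * β * hLLR
  exact stmt5_final α β hα N hN1 (fun n => I n * L n) (fun n => J n * L n) he heq
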